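/- Let k ≥ 1, and let γ_0, …, γ_{k−1} be the extrapolation coefficients of the k-step BDF scheme. Then Σ_{i=0}^{k−1} (k−i−1)^{ℓ−1} γ_i = k^{ℓ−1} for every ℓ = 1, …, k (with the convention 0⁰ = 1). In other words, the explicit k-step BDF method, described by the coefficients δ_0, …, δ_k and γ_0, …, γ_{k−1}, has order k. -/

import Mathlib

open Polynomial

/-- The operator `p ↦ X * p'`. -/
noncomputable def Dop : ℂ[X] → ℂ[X] := fun p => X * derivative p

lemma Dop_sub (p q : ℂ[X]) : Dop (p - q) = Dop p - Dop q := by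
  simp [Dop, mul_sub]

lemma Dop_iter_sub (m : ℕ) (p q : ℂ[X]) :
    Dop^[m] (p - q) = Dop^[m] p - Dop^[m] q := by
  induction m with
  | zero => simp
  | succ m ih => rw [Function.iterate_succ_apply', ih, Dop_sub,
      Function.iterate_succ_apply', Function.iterate_succ_apply']

lemma Dop_sum {s : Finset ℕ} (f : ℕ → ℂ[X]) :
    Dop (∑ i ∈ s, f i) = ∑ i ∈ s, Dop (f i) := by
  simp [Dop, derivative_sum, Finset.mul_sum]

lemma Dop_monomial (c : ℂ) (n : ℕ) :
    Dop (C c * X ^ n) = C ((n : ℂ) * c) * X ^ n := by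
  cases n with
  | zero => simp [Dop]
  | succ n =>
    simp only [Dop, derivative_mul, derivative_C, zero_mul, zero_add,
      derivative_X_pow, Nat.add_sub_cancel, map_mul]
    ring

lemma Dop_iter_monomial (c : ℂ) (n m : ℕ) :
    Dop^[m] (C c * X ^ n) = C ((n : ℂ) ^ m * c) * X ^ n := by
  induction m with
  | zero => simp
  | succ m ih =>
    rw [Function.iterate_succ_apply', ih, Dop_monomial]
    congr 1
    rw [C_inj, pow_succ]
    ring

lemma Dop_iter_pow_dvd (k m : ℕ) (hm : m ≤ k) :
    ∃ r : ℂ[X], Dop^[m] ((X - 1) ^ k) = (X - 1) ^ (k - m) * r := by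
  induction m with
  | zero => exact ⟨1, by simp⟩
  | succ m ih =>
    obtain ⟨r, hr⟩ := ih (Nat.le_of_succ_le hm)
    refine ⟨X * (C ((k - m : ℕ) : ℂ) * r + (X - 1) * derivative r), ?_⟩
    rw [Function.iterate_succ_apply', hr]
    have h1 : k - m = (k - (m + 1)) + 1 := by omega
    have hpow : ((X : ℂ[X]) - 1) ^ (k - m) = (X - 1) ^ (k - (m + 1)) * (X - 1) := by
      rw [h1, pow_succ]
    have hd : derivative (((X : ℂ[X]) - 1) ^ (k - m))
        = C ((k - m : ℕ) : ℂ) * (X - 1) ^ (k - (m + 1)) := by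
      rw [derivative_pow]
      have : k - m - 1 = k - (m + 1) := by omega
      simp [this]
    simp only [Dop]
    rw [derivative_mul, hd, hpow]
    ring

lemma key_identity (k : ℕ) (γc : ℕ → ℝ)
    (hγ : ∀ ζ : ℂ, ζ * ∑ i ∈ Finset.range k, (γc i : ℂ) * ζ ^ i = 1 - (1 - ζ) ^ k) :
    (∑ i ∈ Finset.range k, C ((γc i : ℂ)) * X ^ (k - i - 1))
      = X ^ k - (X - 1) ^ k := by
  apply Polynomial.eq_of_infinite_eval_eq
  have hinf : ({x : ℂ | x ≠ 0}).Infinite := by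
    have : ({(0 : ℂ)} : Set ℂ).Finite := Set.finite_singleton 0
    have h2 := this.infinite_compl
    convert h2 using 1
    ext; simp
  refine hinf.mono ?_
  intro x hx
  simp only [Set.mem_setOf_eq] at hx ⊢
  have h := hγ x⁻¹
  have hmul := congrArg (fun z => x ^ k * z) h
  rw [eval_sub, eval_pow, eval_pow, eval_sub, eval_X, eval_one, eval_finset_sum]
  have hL : x ^ k * (x⁻¹ * ∑ i ∈ Finset.range k, (γc i : ℂ) * x⁻¹ ^ i)
      = ∑ i ∈ Finset.range k, (γc i : ℂ) * x ^ (k - i - 1) := by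
    rw [Finset.mul_sum, Finset.mul_sum]
    apply Finset.sum_congr rfl
    intro i hi
    have hik : i + 1 ≤ k := Finset.mem_range.mp hi
    have h3 : x ^ k * (x⁻¹ * ((γc i : ℂ) * x⁻¹ ^ i)) = (γc i : ℂ) * (x ^ k * (x ^ (i + 1))⁻¹) := by
      rw [← inv_pow]
      ring
    rw [h3, ← pow_sub₀ x hx hik, Nat.sub_sub]
  have hR : x ^ k * (1 - (1 - x⁻¹) ^ k) = x ^ k - (x - 1) ^ k := by
    rw [mul_sub, mul_one, ← mul_pow]
    congr 2
    field_simp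
  rw [hL, hR] at hmul
  simpa [eval_mul, eval_pow] using hmul

/-- **Order conditions of the explicit (extrapolated) `k`-step BDF method.**
If `γ_0, …, γ_{k-1}` are the extrapolation coefficients of the `k`-step BDF scheme,
defined by `∑_{i=0}^{k-1} γ_i ζ^i = (1 - (1-ζ)^k)/ζ`, then
`∑_{i=0}^{k-1} (k-i-1)^{ℓ-1} γ_i = k^{ℓ-1}` for `ℓ = 1, …, k` (with the convention `0⁰ = 1`). -/
theorem bdf_explicit_order_conditions (k : ℕ) (hk : 1 ≤ k)
    (γc : ℕ → ℝ)
    (hγ : ∀ ζ : ℂ, ζ * ∑ i ∈ Finset.range k, (γc i : ℂ) * ζ ^ i = 1 - (1 - ζ) ^ k) :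
    ∀ ℓ : ℕ, 1 ≤ ℓ → ℓ ≤ k →
      ∑ i ∈ Finset.range k, ((k - i - 1 : ℕ) : ℝ) ^ (ℓ - 1) * γc i
        = (k : ℝ) ^ (ℓ - 1) := by
  intro ℓ hℓ1 hℓk
  set m := ℓ - 1 with hm
  have hmk : m < k := by omega
  have hA := key_identity k γc hγ
  have hEq := congrArg (fun p => eval 1 (Dop^[m] p)) hA
  -- compute LHS
  have hiter : Dop^[m] (∑ i ∈ Finset.range k, C ((γc i : ℂ)) * X ^ (k - i - 1))
      = ∑ i ∈ Finset.range k, C (((k - i - 1 : ℕ) : ℂ) ^ m * (γc i : ℂ)) * X ^ (k - i - 1) := by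
    induction m with
    | zero => simp
    | succ n ih =>
      rw [Function.iterate_succ_apply', ih, Dop_sum]
      apply Finset.sum_congr rfl
      intro i _
      rw [Dop_monomial]
      congr 1
      rw [C_inj, pow_succ]
      ring
  rw [hiter] at hEq
  have hL : eval 1 (∑ i ∈ Finset.range k,
        C (((k - i - 1 : ℕ) : ℂ) ^ m * (γc i : ℂ)) * X ^ (k - i - 1))
      = ∑ i ∈ Finset.range k, ((k - i - 1 : ℕ) : ℂ) ^ m * (γc i : ℂ) := by
    rw [eval_finset_sum]
    simp
  -- compute RHS
  obtain ⟨r, hr⟩ := Dop_iter_pow_dvd k m (le_of_lt hmk)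
  have hXk : Dop^[m] ((X : ℂ[X]) ^ k) = C ((k : ℂ) ^ m) * X ^ k := by
    have := Dop_iter_monomial 1 k m
    simpa using this
  rw [Dop_iter_sub, hXk, hr] at hEq
  have hzero : eval 1 (((X : ℂ[X]) - 1) ^ (k - m) * r) = 0 := by
    have hkm : 1 ≤ k - m := by omega
    rw [eval_mul, eval_pow]
    simp [zero_pow (by omega : k - m ≠ 0)]
  rw [eval_sub, hzero, hL] at hEq
  simp only [eval_mul, eval_pow, eval_C, eval_X, one_pow, mul_one, sub_zero] at hEq
  -- now hEq is the complex version; descend to ℝ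
  have : ((∑ i ∈ Finset.range k, ((k - i - 1 : ℕ) : ℝ) ^ m * γc i : ℝ) : ℂ)
      = (((k : ℝ) ^ m : ℝ) : ℂ) := by
    push_cast
    convert hEq using 2
  exact_mod_cast this
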